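/- arXiv:1604.05367 — 6 statements merged into one kernel-verified Lean document; each statement's English description precedes it below -/
import Mathlib

section
/- For all x ∈ (0, π/2], one has x · cot x ≥ 1 − 4x²/π². -/
open Real Set

noncomputable def Faux (t : ℝ) : ℝ := t * cos t - sin t + 4 / π ^ 2 * t ^ 2 * sin t
noncomputable def Gaux (t : ℝ) : ℝ := (8 / π ^ 2 - 1) * sin t + 4 / π ^ 2 * t * cos t
noncomputable def Gaux' (t : ℝ) : ℝ := (12 / π ^ 2 - 1) * cos t - 4 / π ^ 2 * t * sin t

lemma hasDerivAt_Faux (t : ℝ) : HasDerivAt Faux (t * Gaux t) t := by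
  have h : HasDerivAt (fun t : ℝ => t * cos t - sin t + 4 / π ^ 2 * (t ^ 2 * sin t))
      (1 * cos t + t * (-sin t) - cos t + 4 / π ^ 2 * ((2 * t ^ 1) * sin t + t ^ 2 * cos t)) t := by
    exact (((hasDerivAt_id t).mul (Real.hasDerivAt_cos t)).sub (Real.hasDerivAt_sin t)).add
      (((hasDerivAt_pow 2 t).mul (Real.hasDerivAt_sin t)).const_mul _)
  have h2 : Faux = fun t : ℝ => t * cos t - sin t + 4 / π ^ 2 * (t ^ 2 * sin t) := by
    funext s; unfold Faux; ring
  rw [h2]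
  convert h using 1
  unfold Gaux; ring

lemma hasDerivAt_Gaux (t : ℝ) : HasDerivAt Gaux (Gaux' t) t := by
  have h : HasDerivAt (fun t : ℝ => (8 / π ^ 2 - 1) * sin t + 4 / π ^ 2 * (t * cos t))
      ((8 / π ^ 2 - 1) * cos t + 4 / π ^ 2 * (1 * cos t + t * (-sin t))) t :=
    ((Real.hasDerivAt_sin t).const_mul _).add
      (((hasDerivAt_id t).mul (Real.hasDerivAt_cos t)).const_mul _)
  have h2 : Gaux = fun t : ℝ => (8 / π ^ 2 - 1) * sin t + 4 / π ^ 2 * (t * cos t) := by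
    funext s; unfold Gaux; ring
  rw [h2]
  convert h using 1
  unfold Gaux'; ring

lemma hasDerivAt_Gaux' (t : ℝ) :
    HasDerivAt Gaux' (-((16 / π ^ 2 - 1) * sin t + 4 / π ^ 2 * t * cos t)) t := by
  have h : HasDerivAt (fun t : ℝ => (12 / π ^ 2 - 1) * cos t - 4 / π ^ 2 * (t * sin t))
      ((12 / π ^ 2 - 1) * (-sin t) - 4 / π ^ 2 * (1 * sin t + t * cos t)) t :=
    ((Real.hasDerivAt_cos t).const_mul _).sub
      (((hasDerivAt_id t).mul (Real.hasDerivAt_sin t)).const_mul _)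
  have h2 : Gaux' = fun t : ℝ => (12 / π ^ 2 - 1) * cos t - 4 / π ^ 2 * (t * sin t) := by
    funext s; unfold Gaux'; ring
  rw [h2]
  convert h using 1
  ring

lemma Gaux_concave : ConcaveOn ℝ (Icc 0 (π / 2)) Gaux := by
  have hI : interior (Icc (0:ℝ) (π / 2)) = Ioo 0 (π / 2) := interior_Icc
  refine concaveOn_of_hasDerivWithinAt2_nonpos (f' := Gaux')
    (f'' := fun t => -((16 / π ^ 2 - 1) * sin t + 4 / π ^ 2 * t * cos t))
    (convex_Icc _ _) ?_ ?_ ?_ ?_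
  · exact fun t _ => (hasDerivAt_Gaux t).continuousAt.continuousWithinAt
  · exact fun t _ => (hasDerivAt_Gaux t).hasDerivWithinAt
  · exact fun t _ => (hasDerivAt_Gaux' t).hasDerivWithinAt
  · intro t ht
    rw [hI] at ht
    obtain ⟨ht0, ht1⟩ := ht
    have hs : 0 < sin t := sin_pos_of_pos_of_lt_pi ht0 (ht1.trans_le (by linarith [pi_pos]))
    have hc : 0 < cos t := cos_pos_of_mem_Ioo ⟨by linarith [pi_pos], ht1⟩
    have hπ : π < 4 := pi_lt_d2.trans (by norm_num)
    have hπ2 : π ^ 2 < 16 := by nlinarith [pi_pos]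
    have hπ0 : (0:ℝ) < π ^ 2 := by positivity
    have h16 : (0:ℝ) < 16 / π ^ 2 - 1 := by
      rw [sub_pos, lt_div_iff₀ hπ0]; linarith
    nlinarith [mul_pos hs h16, mul_pos (mul_pos ht0 hc) (show (0:ℝ) < 4 / π ^ 2 by positivity)]

theorem mul_cot_ge (x : ℝ) (hx : x ∈ Set.Ioc 0 (Real.pi / 2)) :
    x * (Real.cos x / Real.sin x) ≥ 1 - 4 * x ^ 2 / Real.pi ^ 2 := by
  obtain ⟨hx0, hx1⟩ := hx
  have hπ : (0:ℝ) < π := pi_pos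
  have hs : 0 < sin x := sin_pos_of_pos_of_lt_pi hx0 (lt_of_le_of_lt hx1 (by linarith))
  -- reduce to Faux x ≥ 0
  have key : 0 ≤ Faux x := by
    have hG0 : Gaux 0 = 0 := by simp [Gaux]
    have hF0 : Faux 0 = 0 := by simp [Faux]
    have hFπ : Faux (π / 2) = 0 := by
      have hπ2 : π ^ 2 ≠ 0 := by positivity
      simp only [Faux, cos_pi_div_two, sin_pi_div_two]
      field_simp
      ring
    -- min-of-endpoints for concave Gaux
    have hmin : ∀ a b, 0 ≤ a → a ≤ b → b ≤ π / 2 → 0 ≤ Gaux b → ∀ t ∈ Icc a b, 0 ≤ Gaux t := by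
      intro a b ha hab hb hGb t ht
      have h1 : t ∈ Icc (0:ℝ) b := ⟨le_trans ha ht.1, ht.2⟩
      have := Gaux_concave.ge_on_segment (x := 0) (y := b)
        ⟨le_refl _, by linarith⟩ ⟨by linarith, hb⟩
        (by rw [segment_eq_Icc (by linarith : (0:ℝ) ≤ b)]; exact h1)
      rw [hG0] at this
      exact le_trans (le_min (le_refl 0) hGb) this
    by_cases hcase : 0 ≤ Gaux x
    · -- Faux monotone on [0, x]
      have hmono : MonotoneOn Faux (Icc 0 x) := by
        apply monotoneOn_of_deriv_nonneg (convex_Icc _ _)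
          (fun t _ => (hasDerivAt_Faux t).continuousAt.continuousWithinAt)
          (fun t _ => ((hasDerivAt_Faux t).differentiableAt).differentiableWithinAt)
        intro t ht
        rw [interior_Icc] at ht
        rw [(hasDerivAt_Faux t).deriv]
        have : 0 ≤ Gaux t := hmin 0 x le_rfl hx0.le hx1 hcase t ⟨ht.1.le, ht.2.le⟩
        exact mul_nonneg ht.1.le this
      have := hmono ⟨le_rfl, hx0.le⟩ ⟨hx0.le, le_rfl⟩ hx0.le
      rwa [hF0] at this
    · -- Gaux < 0 on [x, π/2], Faux antitone there
      push_neg at hcase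
      have hneg : ∀ t ∈ Icc x (π / 2), Gaux t ≤ 0 := by
        intro t ht
        by_contra h
        push_neg at h
        have : 0 ≤ Gaux x := hmin 0 t le_rfl (le_trans hx0.le ht.1) ht.2 h.le x ⟨hx0.le, ht.1⟩
        linarith
      have hanti : AntitoneOn Faux (Icc x (π / 2)) := by
        apply antitoneOn_of_deriv_nonpos (convex_Icc _ _)
          (fun t _ => (hasDerivAt_Faux t).continuousAt.continuousWithinAt)
          (fun t _ => ((hasDerivAt_Faux t).differentiableAt).differentiableWithinAt)
        intro t ht
        rw [interior_Icc] at ht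
        rw [(hasDerivAt_Faux t).deriv]
        have ht0 : 0 < t := lt_of_lt_of_le hx0 ht.1.le
        exact mul_nonpos_of_nonneg_of_nonpos ht0.le (hneg t ⟨ht.1.le, ht.2.le⟩)
      have := hanti ⟨le_rfl, hx1⟩ ⟨hx1, le_rfl⟩ hx1
      rwa [hFπ] at this
  -- convert
  rw [ge_iff_le, ← sub_nonneg]
  have h1 : x * (cos x / sin x) - (1 - 4 * x ^ 2 / π ^ 2) = Faux x / sin x := by
    unfold Faux
    field_simp
    ring
  rw [h1]
  positivity
end

section
/- For α ∈ (0, π] and real numbers t > 0, c > 0, one has (t + c)/|t·e^{iα} − c| ≤ 1/sin(α/2), with equality when t = c. -/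
lemma abs_sector (α t c : ℝ) :
    ‖(t * Complex.exp (α * Complex.I) - c : ℂ)‖
      = Real.sqrt (t^2 + c^2 - 2*t*c*Real.cos α) := by
  rw [Complex.norm_def]
  congr 1
  have : ((t : ℂ) * Complex.exp (α * Complex.I) - c)
      = Complex.mk (t * Real.cos α - c) (t * Real.sin α) := by
    rw [show ((α:ℂ) * Complex.I) = ((α:ℝ):ℂ) * Complex.I from rfl, Complex.exp_mul_I]
    apply Complex.ext <;>
      simp [Complex.cos_ofReal_re, Complex.sin_ofReal_re, Complex.ext_iff]
  rw [this, Complex.normSq_mk]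
  nlinarith [Real.sin_sq_add_cos_sq α]

theorem ptolemy_ratio_sector_le (α t c : ℝ) (hα : α ∈ Set.Ioc 0 Real.pi)
    (ht : 0 < t) (hc : 0 < c) :
    (t + c) / ‖(t * Complex.exp (α * Complex.I) - c : ℂ)‖
      ≤ 1 / Real.sin (α / 2) ∧
    (c + c) / ‖(c * Complex.exp (α * Complex.I) - c : ℂ)‖
      = 1 / Real.sin (α / 2) := by
  obtain ⟨hα0, hαπ⟩ := hα
  set s := Real.sin (α / 2) with hs
  have hspos : 0 < s := Real.sin_pos_of_pos_of_lt_pi (by linarith)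
    (by linarith [Real.pi_pos])
  have hs1 : s ≤ 1 := Real.sin_le_one _
  have hcos : Real.cos α = 1 - 2 * s ^ 2 := by
    have h2 := Real.cos_two_mul' (α/2)
    have h1 := Real.sin_sq_add_cos_sq (α/2)
    have : (2 : ℝ) * (α/2) = α := by ring
    rw [this] at h2
    nlinarith
  have key : ∀ u : ℝ, 0 < u →
      (u + c) / ‖(u * Complex.exp (α * Complex.I) - c : ℂ)‖
        ≤ 1 / s := by
    intro u hu
    rw [abs_sector]
    have hA : u^2 + c^2 - 2*u*c*Real.cos α = (u - c)^2 + 4*u*c*s^2 := by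
      rw [hcos]; ring
    have hApos : 0 < u^2 + c^2 - 2*u*c*Real.cos α := by
      rw [hA]; positivity
    rw [div_le_div_iff₀ (Real.sqrt_pos.mpr hApos) hspos]
    have hle : (u + c) * s ≤ Real.sqrt (u^2 + c^2 - 2*u*c*Real.cos α) := by
      rw [show u^2 + c^2 - 2*u*c*Real.cos α = (u - c)^2 + 4*u*c*s^2 from hA]
      have h1 : ((u + c) * s)^2 ≤ (u - c)^2 + 4*u*c*s^2 := by
        nlinarith [mul_nonneg (sq_nonneg (u - c)) (show (0:ℝ) ≤ 1 - s^2 by nlinarith)]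
      calc (u + c) * s ≤ |(u + c) * s| := le_abs_self _
        _ = Real.sqrt (((u + c) * s)^2) := (Real.sqrt_sq_eq_abs _).symm
        _ ≤ _ := Real.sqrt_le_sqrt h1
    linarith
  constructor
  · exact key t ht
  · rw [abs_sector]
    have hA : c^2 + c^2 - 2*c*c*Real.cos α = (2*c*s)^2 := by rw [hcos]; ring
    rw [hA, Real.sqrt_sq (by positivity)]
    field_simp
    ring
end

section
/- For α ∈ (0, π] and c ∈ (0,1), the quantity (|c − 1| + |c·e^{iα} − 1|)/|e^{iα} − 1| is strictly greater than (1 − c)/sin(α/2). Consequently, the supremum over c ∈ (0,1) of (|c − 1| + |c·e^{iα} − 1|)/|e^{iα} − 1| is at least 1/sin(α/2). -/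
theorem ptolemy_ratio_sector_lower (α : ℝ) (hα : α ∈ Set.Ioc 0 Real.pi) :
    (∀ c ∈ Set.Ioo (0 : ℝ) 1,
      (‖(c : ℂ) - 1‖ + ‖(c : ℂ) * Complex.exp (α * Complex.I) - 1‖) /
          ‖Complex.exp (α * Complex.I) - 1‖
        > (1 - c) / Real.sin (α / 2)) ∧
    sSup {p : ℝ | ∃ c ∈ Set.Ioo (0 : ℝ) 1,
        p = (‖(c : ℂ) - 1‖ + ‖(c : ℂ) * Complex.exp (α * Complex.I) - 1‖) /
          ‖Complex.exp (α * Complex.I) - 1‖}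
      ≥ 1 / Real.sin (α / 2) := by
  obtain ⟨hα0, hαπ⟩ := hα
  have hs : 0 < Real.sin (α / 2) :=
    Real.sin_pos_of_pos_of_lt_pi (by linarith) (by linarith [Real.pi_pos])
  have hsin2 : Real.sin (α / 2) ^ 2 = 1 / 2 - Real.cos α / 2 := by
    have h1 := Real.cos_sq (α / 2)
    rw [show 2 * (α / 2) = α by ring] at h1
    have h2 : Real.sin (α / 2) ^ 2 = 1 - Real.cos (α / 2) ^ 2 := Real.sin_sq _
    rw [h2, h1]; ring
  have hcos : Real.cos α < 1 := by nlinarith [hs]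
  -- denominator value
  have hden : ‖Complex.exp (α * Complex.I) - 1‖ = 2 * Real.sin (α / 2) := by
    rw [Complex.exp_mul_I]
    have : (Complex.cos α + Complex.sin α * Complex.I - 1)
        = ((Real.cos α - 1 : ℝ) : ℂ) + (Real.sin α : ℝ) * Complex.I := by
      push_cast [Complex.ofReal_cos, Complex.ofReal_sin]
      ring
    rw [this, Complex.norm_add_mul_I]
    have h1 : (Real.cos α - 1) ^ 2 + Real.sin α ^ 2 = (2 * Real.sin (α / 2)) ^ 2 := by
      have := Real.sin_sq_add_cos_sq α
      nlinarith
    rw [h1, Real.sqrt_sq (by positivity)]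
  -- numerator estimate for each c
  have key : ∀ c ∈ Set.Ioo (0 : ℝ) 1,
      (‖(c : ℂ) - 1‖ + ‖(c : ℂ) * Complex.exp (α * Complex.I) - 1‖) /
          ‖Complex.exp (α * Complex.I) - 1‖
        > (1 - c) / Real.sin (α / 2) := by
    intro c hc
    obtain ⟨hc0, hc1⟩ := hc
    have h1 : ‖(c : ℂ) - 1‖ = 1 - c := by
      rw [show ((c : ℂ) - 1) = ((c - 1 : ℝ) : ℂ) by push_cast; ring, Complex.norm_real, Real.norm_eq_abs]
      rw [abs_of_nonpos (by linarith)]; ring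
    have h2 : ‖(c : ℂ) * Complex.exp (α * Complex.I) - 1‖ > 1 - c := by
      rw [Complex.exp_mul_I]
      have he : ((c : ℂ) * (Complex.cos α + Complex.sin α * Complex.I) - 1)
          = ((c * Real.cos α - 1 : ℝ) : ℂ) + ((c * Real.sin α : ℝ)) * Complex.I := by
        push_cast [Complex.ofReal_cos, Complex.ofReal_sin]
        ring
      rw [he, Complex.norm_add_mul_I]
      have hlt : (1 - c) ^ 2 < (c * Real.cos α - 1) ^ 2 + (c * Real.sin α) ^ 2 := by
        have := Real.sin_sq_add_cos_sq α
        nlinarith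
      calc 1 - c = Real.sqrt ((1 - c) ^ 2) := by
            rw [Real.sqrt_sq (by linarith)]
        _ < Real.sqrt ((c * Real.cos α - 1) ^ 2 + (c * Real.sin α) ^ 2) :=
            Real.sqrt_lt_sqrt (by positivity) hlt
    rw [hden]
    rw [gt_iff_lt, div_lt_div_iff₀ hs (by linarith)]
    nlinarith [h2]
  refine ⟨key, ?_⟩
  -- boundedness
  have hbdd : BddAbove {p : ℝ | ∃ c ∈ Set.Ioo (0 : ℝ) 1,
      p = (‖(c : ℂ) - 1‖ + ‖(c : ℂ) * Complex.exp (α * Complex.I) - 1‖) /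
        ‖Complex.exp (α * Complex.I) - 1‖} := by
    refine ⟨3 / (2 * Real.sin (α / 2)), ?_⟩
    rintro p ⟨c, ⟨hc0, hc1⟩, rfl⟩
    rw [hden]
    have hnum : ‖(c:ℂ) - 1‖ + ‖(c:ℂ) * Complex.exp (α * Complex.I) - 1‖ ≤ 3 := by
      have b1 : ‖(c:ℂ) - 1‖ ≤ 1 := by
        rw [show ((c : ℂ) - 1) = ((c - 1 : ℝ) : ℂ) by push_cast; ring, Complex.norm_real, Real.norm_eq_abs,
          abs_of_nonpos (by linarith)]
        linarith
      have b2 : ‖(c:ℂ) * Complex.exp (α * Complex.I) - 1‖ ≤ 2 := by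
        calc ‖(c:ℂ) * Complex.exp (α * Complex.I) - 1‖
            ≤ ‖(c:ℂ) * Complex.exp (α * Complex.I)‖ + ‖(1:ℂ)‖ := by
              simpa using norm_sub_le ((c:ℂ) * Complex.exp (α * Complex.I)) 1
          _ = |c| * ‖Complex.exp (α * Complex.I)‖ + 1 := by simp
          _ ≤ 2 := by
              rw [abs_of_pos hc0, Complex.norm_exp]
              simp only [Complex.mul_re, Complex.ofReal_re, Complex.I_re, Complex.ofReal_im,
                Complex.I_im]
              norm_num
              nlinarith [Real.exp_zero]
      linarith
    gcongr
  -- sSup lower bound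
  set s := Real.sin (α / 2)
  refine le_of_forall_lt fun a ha => ?_
  have has : a * s < 1 := by
    calc a * s < (1 / s) * s := mul_lt_mul_of_pos_right ha hs
      _ = 1 := by field_simp
  set c : ℝ := min (1 - a * s) 1 / 2 with hcdef
  have hcpos : 0 < c := by
    apply div_pos _ (by norm_num)
    exact lt_min (by linarith) one_pos
  have hclt1 : c < 1 := by
    have : min (1 - a * s) 1 ≤ 1 := min_le_right _ _
    rw [hcdef]; linarith
  have hcmem : c ∈ Set.Ioo (0:ℝ) 1 := ⟨hcpos, hclt1⟩
  have hle : a ≤ (1 - c) / s := by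
    rw [le_div_iff₀ hs]
    have : min (1 - a * s) 1 ≤ 1 - a * s := min_le_left _ _
    have : c ≤ 1 - a * s := by rw [hcdef]; linarith
    linarith
  calc a ≤ (1 - c) / s := hle
    _ < (‖(c : ℂ) - 1‖ + ‖(c : ℂ) * Complex.exp (α * Complex.I) - 1‖) /
          ‖Complex.exp (α * Complex.I) - 1‖ := key c hcmem
    _ ≤ _ := le_csSup hbdd ⟨c, hcmem, rfl⟩
end

section
/- For α ∈ (0, π], the supremum over t > 0 and c > 0 of (t + c)/|t·e^{iα} − c| equals 1/sin(α/2). -/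
theorem ptolemy_ratio_sector_sup (α : ℝ) (hα : α ∈ Set.Ioc 0 Real.pi) :
    sSup {p : ℝ | ∃ t > (0 : ℝ), ∃ c > (0 : ℝ),
        p = (t + c) / ‖(t * Complex.exp (α * Complex.I) - c : ℂ)‖}
      = 1 / Real.sin (α / 2) := by
  obtain ⟨hα0, hαπ⟩ := hα
  have hs0 : 0 < Real.sin (α / 2) :=
    Real.sin_pos_of_pos_of_lt_pi (by linarith) (by linarith [Real.pi_pos])
  have hs1 : Real.sin (α / 2) ≤ 1 := Real.sin_le_one _
  have hcos : Real.cos α = 1 - 2 * Real.sin (α / 2) ^ 2 := by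
    have h1 : Real.cos (2 * (α / 2)) = 2 * Real.cos (α / 2) ^ 2 - 1 :=
      Real.cos_two_mul _
    have h2 := Real.sin_sq_add_cos_sq (α / 2)
    have : (2 : ℝ) * (α / 2) = α := by ring
    rw [this] at h1
    linarith
  have habs : ∀ t c : ℝ,
      (‖(t * Complex.exp (α * Complex.I) - c : ℂ)‖) ^ 2
        = t ^ 2 - 2 * t * c * Real.cos α + c ^ 2 := by
    intro t c
    rw [Complex.sq_norm, Complex.normSq_apply]
    simp [Complex.exp_ofReal_mul_I_re, Complex.exp_ofReal_mul_I_im]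
    nlinarith [Real.sin_sq_add_cos_sq α]
  set s := Real.sin (α / 2) with hsdef
  -- the key value is attained at t = c = 1
  have hmem : (1 : ℝ) / s ∈ {p : ℝ | ∃ t > (0 : ℝ), ∃ c > (0 : ℝ),
      p = (t + c) / ‖(t * Complex.exp (α * Complex.I) - c : ℂ)‖} := by
    refine ⟨1, one_pos, 1, one_pos, ?_⟩
    have hA2 := habs 1 1
    have hA0 : (0 : ℝ) ≤ ‖((1 : ℝ) * Complex.exp (α * Complex.I) - (1 : ℝ) : ℂ)‖ :=
      norm_nonneg _
    have hAeq : ‖((1 : ℝ) * Complex.exp (α * Complex.I) - (1 : ℝ) : ℂ)‖ = 2 * s := by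
      nlinarith [hA2]
    rw [hAeq]
    rw [div_eq_div_iff hs0.ne' (by positivity)]
    ring
  have hub : ∀ p ∈ {p : ℝ | ∃ t > (0 : ℝ), ∃ c > (0 : ℝ),
      p = (t + c) / ‖(t * Complex.exp (α * Complex.I) - c : ℂ)‖}, p ≤ 1 / s := by
    rintro p ⟨t, ht, c, hc, rfl⟩
    have hA2 := habs t c
    set A := ‖((t : ℂ) * Complex.exp (α * Complex.I) - (c : ℂ))‖ with hAdef
    have hA0 : (0 : ℝ) ≤ A := norm_nonneg _
    have h1s : s ^ 2 ≤ 1 := by nlinarith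
    have hApos : 0 < A := by
      nlinarith [mul_pos ht hc, sq_nonneg (t - c),
        mul_pos (mul_pos ht hc) (mul_pos hs0 hs0)]
    rw [div_le_div_iff₀ hApos hs0]
    -- (t + c) * s ≤ A
    have hkey : ((t + c) * s) ^ 2 ≤ A ^ 2 := by
      nlinarith [mul_nonneg (sq_nonneg (t - c)) (by linarith : (0:ℝ) ≤ 1 - s ^ 2),
        mul_pos ht hc]
    nlinarith [mul_nonneg (mul_nonneg (by linarith : (0:ℝ) ≤ t + c) hs0.le) hA0]
  exact le_antisymm (csSup_le ⟨1 / s, hmem⟩ hub) (le_csSup ⟨1 / s, hub⟩ hmem)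
end

section
/- For the ellipse with semiaxes a > b > 0 given by boundary {(x,y) : (x/a)² + (y/b)² = 1}, if z = (t,0) with a − b²/a < |t| < a, then the distance from z to the boundary equals a − |t|. -/
theorem dist_to_ellipse_boundary_outer (a b t : ℝ) (hab : a > b) (hb : 0 < b)
    (ht1 : a - b ^ 2 / a < |t|) (ht2 : |t| < a) :
    Metric.infDist (t : ℂ) {w : ℂ | (w.re / a) ^ 2 + (w.im / b) ^ 2 = 1}
      = a - |t| := by
  have ha : (0:ℝ) < a := lt_trans hb hab
  have ha' : a ≠ 0 := ne_of_gt ha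
  set v : ℝ := if 0 ≤ t then a else -a with hv
  have hvmem : (v : ℂ) ∈ {w : ℂ | (w.re / a) ^ 2 + (w.im / b) ^ 2 = 1} := by
    simp only [Set.mem_setOf_eq, Complex.ofReal_re, Complex.ofReal_im]
    rw [hv]
    split <;> field_simp <;> ring
  have hne : Set.Nonempty {w : ℂ | (w.re / a) ^ 2 + (w.im / b) ^ 2 = 1} :=
    ⟨_, hvmem⟩
  apply le_antisymm
  · calc Metric.infDist (t : ℂ) _ ≤ dist (t : ℂ) (v : ℂ) :=
          Metric.infDist_le_dist_of_mem hvmem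
      _ = a - |t| := by
          rw [Complex.dist_eq, ← Complex.ofReal_sub, Complex.norm_real, Real.norm_eq_abs, hv]
          rcases le_or_gt 0 t with h | h
          · rw [if_pos h, abs_of_nonpos (by linarith [le_abs_self t]),
              abs_of_nonneg h]
            ring
          · rw [if_neg (not_le.2 h), abs_of_nonneg
              (by linarith [neg_abs_le t]), abs_of_neg h]
            ring
  · rw [← not_lt]
    intro hcon
    rw [Metric.infDist_lt_iff hne] at hcon
    obtain ⟨w, hw, hdlt⟩ := hcon
    rw [← not_le] at hdlt
    apply hdlt
    simp only [Set.mem_setOf_eq] at hw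
    set x := w.re
    set y := w.im
    have heq : a ^ 2 * y ^ 2 = b ^ 2 * (a ^ 2 - x ^ 2) := by
      field_simp at hw
      nlinarith [hw]
    have hx2 : x ^ 2 ≤ a ^ 2 := by
      nlinarith [sq_nonneg y, mul_pos hb hb, heq]
    have hs : |x| ≤ a := by
      rw [abs_le]; constructor <;> nlinarith [sq_abs x]
    have hts : (|x| - |t|) ^ 2 ≤ (t - x) ^ 2 := by
      have h1 : t * x ≤ |t * x| := le_abs_self _
      rw [abs_mul] at h1
      nlinarith [sq_abs x, sq_abs t]
    have hab2 : a ^ 2 - b ^ 2 < a * |t| := by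
      have : (a - b ^ 2 / a) * a < |t| * a := mul_lt_mul_of_pos_right ht1 ha
      field_simp at this
      nlinarith
    have hb2 : 0 ≤ a ^ 2 - b ^ 2 := by nlinarith
    have h2 : (a ^ 2 - b ^ 2) * (|x| + a) ≤ 2 * a ^ 2 * |t| := by
      have h3 : (a ^ 2 - b ^ 2) * (|x| + a) ≤ (a ^ 2 - b ^ 2) * (2 * a) :=
        mul_le_mul_of_nonneg_left (by linarith) hb2
      nlinarith [mul_lt_mul_of_pos_left hab2 (show (0:ℝ) < 2 * a by linarith)]
    have key : 0 ≤ (a - |x|) * (2 * a ^ 2 * |t| - (a ^ 2 - b ^ 2) * (|x| + a)) :=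
      mul_nonneg (by linarith) (by linarith)
    have C : a ^ 2 * (|x| - |t|) ^ 2 ≤ a ^ 2 * (t - x) ^ 2 :=
      mul_le_mul_of_nonneg_left hts (by positivity)
    have expand : a ^ 2 * (|x| - |t|) ^ 2 + a ^ 2 * y ^ 2 - a ^ 2 * (a - |t|) ^ 2
        = (a - |x|) * (2 * a ^ 2 * |t| - (a ^ 2 - b ^ 2) * (|x| + a)) := by
      linear_combination heq + b ^ 2 * sq_abs x
    have final : a ^ 2 * (a - |t|) ^ 2 ≤ a ^ 2 * ((t - x) ^ 2 + y ^ 2) := by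
      have : a ^ 2 * ((t - x) ^ 2 + y ^ 2) = a ^ 2 * (t - x) ^ 2 + a ^ 2 * y ^ 2 := by
        ring
      linarith [key, C, expand]
    have hgoal : (a - |t|) ^ 2 ≤ (t - x) ^ 2 + y ^ 2 :=
      le_of_mul_le_mul_left (by linarith) (by positivity : (0:ℝ) < a ^ 2)
    have hdist : dist (t : ℂ) w = Real.sqrt ((t - x) ^ 2 + (0 - y) ^ 2) := by
      rw [Complex.dist_eq_re_im]
      simp
      rfl
    rw [hdist, show (0 - y) ^ 2 = y ^ 2 by ring, Real.le_sqrt (by linarith)]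
    · exact hgoal
    · positivity
end

section
/- For c ∈ (0,1], one has 1/sin(cπ/2) ≤ (2/π)(c + 1/c), i.e., the function f(c) = 2/(sin(cπ/2)·(c + 1/c)) satisfies f(c) ≤ 4/π, with f(c) → 4/π as c → 0⁺ and f nonincreasing on (0,1]. -/
open Real Filter Set

set_option maxHeartbeats 1000000 in
private lemma key_deriv_nonneg (c : ℝ) (hc0 : 0 < c) (hc1 : c < 1) :
    (1 - c ^ 2) * Real.sin (c * Real.pi / 2) ≤
      Real.pi / 2 * (c * (c ^ 2 + 1)) * Real.cos (c * Real.pi / 2) := by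
  have hpi1 : (3.141592 : ℝ) < Real.pi := Real.pi_gt_d6
  have hpi2 : Real.pi < 3.15 := Real.pi_lt_d2
  have hpipos : (0:ℝ) < Real.pi := by linarith
  have hx0 : 0 ≤ c * Real.pi / 2 := by positivity
  have hsinle : Real.sin (c * Real.pi / 2) ≤ c * Real.pi / 2 := Real.sin_le hx0
  have hsinpos : 0 ≤ Real.sin (c * Real.pi / 2) := by
    apply Real.sin_nonneg_of_nonneg_of_le_pi hx0
    nlinarith
  have hpisq : Real.pi ^ 2 < 9.9225 := by nlinarith
  have hpicube : Real.pi ^ 3 < 32 := by nlinarith [sq_nonneg Real.pi]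
  rcases le_or_gt c (1/2) with hhalf | hhalf
  · -- small c : use cos x ≥ 1 - x²/2, sin x ≤ x
    have hcos : 1 - (c * Real.pi / 2) ^ 2 / 2 ≤ Real.cos (c * Real.pi / 2) :=
      Real.one_sub_sq_div_two_le_cos
    have hA2 : c ^ 2 ≤ 1/4 := by nlinarith
    have hA1 : Real.pi ^ 2 * c ^ 2 ≤ 9.9225 * c ^ 2 :=
      mul_le_mul_of_nonneg_right hpisq.le (sq_nonneg c)
    have hA4 : c ^ 2 * c ^ 2 ≤ (1/4) * c ^ 2 := mul_le_mul_of_nonneg_right hA2 (sq_nonneg c)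
    have hA5 : Real.pi ^ 2 * (c ^ 2 * c ^ 2) ≤ 9.9225 * (c ^ 2 * c ^ 2) :=
      mul_le_mul_of_nonneg_right hpisq.le (mul_nonneg (sq_nonneg c) (sq_nonneg c))
    have h5 : (1 - c ^ 2) ≤ (c ^ 2 + 1) * (1 - (c * Real.pi / 2) ^ 2 / 2) := by
      nlinarith [hA1, hA4, hA5, sq_nonneg c]
    calc (1 - c ^ 2) * Real.sin (c * Real.pi / 2)
        ≤ (1 - c ^ 2) * (c * Real.pi / 2) := by
          apply mul_le_mul_of_nonneg_left hsinle
          nlinarith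
      _ ≤ ((c ^ 2 + 1) * (1 - (c * Real.pi / 2) ^ 2 / 2)) * (c * Real.pi / 2) := by
          apply mul_le_mul_of_nonneg_right h5
          positivity
      _ = Real.pi / 2 * (c * (c ^ 2 + 1)) * (1 - (c * Real.pi / 2) ^ 2 / 2) := by ring
      _ ≤ Real.pi / 2 * (c * (c ^ 2 + 1)) * Real.cos (c * Real.pi / 2) := by
          apply mul_le_mul_of_nonneg_left hcos
          positivity
  · -- large c : cos x = sin y with y = (1-c)π/2, use sin y > y - y³/4
    set y := (1 - c) * Real.pi / 2 with hy
    have h1c : (0:ℝ) < 1 - c := by linarith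
    have hy0 : 0 < y := by positivity
    have hy1 : y ≤ 1 := by
      have h12 : 1 - c ≤ 1/2 := by linarith
      rw [hy]
      nlinarith
    have hxy : c * Real.pi / 2 = Real.pi / 2 - y := by rw [hy]; ring
    have hcos : y - y ^ 3 / 4 < Real.cos (c * Real.pi / 2) := by
      rw [hxy, Real.cos_pi_div_two_sub]
      have := Real.sin_gt_sub_cube hy0
      nlinarith [pow_pos hy0 3]
    -- reduce to polynomial inequality
    have hkey : (1 - c ^ 2) * (c * Real.pi / 2) ≤
        Real.pi / 2 * (c * (c ^ 2 + 1)) * (y - y ^ 3 / 4) := by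
      rw [hy]
      have hb1 : Real.pi ^ 3 * ((1 - c) ^ 2 * (c ^ 2 + 1)) ≤
          32 * ((1 - c) ^ 2 * (c ^ 2 + 1)) :=
        mul_le_mul_of_nonneg_right hpicube.le (by positivity)
      have hb2 : 1.57 * (c ^ 2 + 1) ≤ Real.pi / 2 * (c ^ 2 + 1) := by nlinarith [sq_nonneg c]
      have ht : (0:ℝ) ≤ c - 1/2 := by linarith
      have hu : (0:ℝ) ≤ 1 - c := by linarith
      have hs : (0:ℝ) ≤ (1 - c) ^ 3 - 1.5 * (1 - c) ^ 2 - 0.32 * (1 - c) + 1.98 := by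
        nlinarith [mul_nonneg hu ht, mul_nonneg (mul_nonneg hu hu) hu]
      have hrat : 1 + c + ((1 - c) ^ 2 * (c ^ 2 + 1)) ≤ 1.57 * (c ^ 2 + 1) := by
        nlinarith [mul_nonneg ht hs]
      have h2 : (1:ℝ) + c ≤ (c ^ 2 + 1) * (Real.pi / 2) *
          (1 - ((1 - c) * Real.pi / 2) ^ 2 / 4) := by nlinarith [hb1, hb2, hrat]
      calc (1 - c ^ 2) * (c * Real.pi / 2)
          = (c * Real.pi / 2 * (1 - c)) * (1 + c) := by ring
        _ ≤ (c * Real.pi / 2 * (1 - c)) *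
            ((c ^ 2 + 1) * (Real.pi / 2) * (1 - ((1 - c) * Real.pi / 2) ^ 2 / 4)) := by
            apply mul_le_mul_of_nonneg_left h2
            positivity
        _ = Real.pi / 2 * (c * (c ^ 2 + 1)) *
            ((1 - c) * Real.pi / 2 - ((1 - c) * Real.pi / 2) ^ 3 / 4) := by ring
    have hcnonneg : 0 ≤ Real.pi / 2 * (c * (c ^ 2 + 1)) := by positivity
    calc (1 - c ^ 2) * Real.sin (c * Real.pi / 2)
        ≤ (1 - c ^ 2) * (c * Real.pi / 2) := by
          apply mul_le_mul_of_nonneg_left hsinle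
          nlinarith
      _ ≤ Real.pi / 2 * (c * (c ^ 2 + 1)) * (y - y ^ 3 / 4) := hkey
      _ ≤ Real.pi / 2 * (c * (c ^ 2 + 1)) * Real.cos (c * Real.pi / 2) :=
          mul_le_mul_of_nonneg_left hcos.le hcnonneg

private lemma g_hasDerivAt (c : ℝ) (hc : c ≠ 0) :
    HasDerivAt (fun c : ℝ => Real.sin (c * Real.pi / 2) * (c + 1 / c))
      (Real.cos (c * Real.pi / 2) * (Real.pi / 2) * (c + 1 / c) +
        Real.sin (c * Real.pi / 2) * (1 - 1 / c ^ 2)) c := by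
  have h1 : HasDerivAt (fun c : ℝ => c * Real.pi / 2) (Real.pi / 2) c := by
    simpa using ((hasDerivAt_id c).mul_const Real.pi).div_const 2
  have h2 : HasDerivAt (fun c : ℝ => Real.sin (c * Real.pi / 2))
      (Real.cos (c * Real.pi / 2) * (Real.pi / 2)) c :=
    (Real.hasDerivAt_sin _).comp c h1
  have h3 : HasDerivAt (fun c : ℝ => c + 1 / c) (1 - 1 / c ^ 2) c := by
    have h := (hasDerivAt_id c).add (hasDerivAt_inv hc)
    have hval : (1 : ℝ) + -(c ^ 2)⁻¹ = 1 - 1 / c ^ 2 := by ring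
    rw [hval] at h
    exact h.congr_of_eventuallyEq (Filter.Eventually.of_forall fun x => by simp [one_div])
  exact h2.mul h3

private lemma g_mono : MonotoneOn (fun c : ℝ => Real.sin (c * Real.pi / 2) * (c + 1 / c))
    (Set.Ioc (0:ℝ) 1) := by
  apply monotoneOn_of_deriv_nonneg (convex_Ioc 0 1)
  · apply ContinuousOn.mul
    · exact (Real.continuous_sin.comp (by continuity)).continuousOn
    · exact continuousOn_id.add (continuousOn_const.div continuousOn_id fun x hx => hx.1.ne')
  · rw [interior_Ioc]
    exact fun c hc => ((g_hasDerivAt c hc.1.ne').differentiableAt).differentiableWithinAt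
  · rw [interior_Ioc]
    intro c hc
    obtain ⟨hc0, hc1⟩ := hc
    rw [(g_hasDerivAt c hc0.ne').deriv]
    have h := key_deriv_nonneg c hc0 hc1
    have hq : Real.cos (c * Real.pi / 2) * (Real.pi / 2) * (c + 1 / c) +
        Real.sin (c * Real.pi / 2) * (1 - 1 / c ^ 2) =
        (Real.pi / 2 * (c * (c ^ 2 + 1)) * Real.cos (c * Real.pi / 2) -
          (1 - c ^ 2) * Real.sin (c * Real.pi / 2)) / c ^ 2 := by
      field_simp
      ring
    rw [hq]
    apply div_nonneg (by linarith) (sq_nonneg c)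

private lemma g_tendsto : Filter.Tendsto (fun c : ℝ => Real.sin (c * Real.pi / 2) * (c + 1 / c))
    (nhdsWithin 0 (Set.Ioi 0)) (nhds (Real.pi / 2)) := by
  have hslope : Filter.Tendsto (fun y : ℝ => Real.sin y / y) (nhdsWithin 0 {(0:ℝ)}ᶜ) (nhds 1) := by
    have h := hasDerivAt_iff_tendsto_slope.mp (Real.hasDerivAt_sin 0)
    rw [Real.cos_zero] at h
    apply h.congr
    intro y
    rw [slope_def_field]
    simp
  have hmap : Filter.Tendsto (fun c : ℝ => c * Real.pi / 2) (nhdsWithin 0 (Set.Ioi 0))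
      (nhdsWithin 0 {(0:ℝ)}ᶜ) := by
    apply tendsto_nhdsWithin_of_tendsto_nhds_of_eventually_within
    · have h : Filter.Tendsto (fun c : ℝ => c * Real.pi / 2) (nhds 0)
          (nhds (0 * Real.pi / 2)) :=
        ((continuous_id.mul continuous_const).div_const 2).tendsto 0
      simpa using h.mono_left nhdsWithin_le_nhds
    · filter_upwards [self_mem_nhdsWithin] with c hc
      have hc0 : (0:ℝ) < c := hc
      have : 0 < c * Real.pi / 2 := by positivity
      exact ne_of_gt this
  have h1 : Filter.Tendsto (fun c : ℝ => Real.sin (c * Real.pi / 2) / (c * Real.pi / 2))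
      (nhdsWithin 0 (Set.Ioi 0)) (nhds 1) := hslope.comp hmap
  have h2 : Filter.Tendsto (fun c : ℝ => Real.pi / 2 * (c ^ 2 + 1))
      (nhdsWithin 0 (Set.Ioi 0)) (nhds (Real.pi / 2)) := by
    have h : Filter.Tendsto (fun c : ℝ => Real.pi / 2 * (c ^ 2 + 1)) (nhds 0)
        (nhds (Real.pi / 2 * ((0:ℝ) ^ 2 + 1))) :=
      (continuous_const.mul ((continuous_pow 2).add continuous_const)).tendsto 0
    simpa using h.mono_left nhdsWithin_le_nhds
  have h3 := h1.mul h2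
  rw [one_mul] at h3
  apply h3.congr'
  filter_upwards [self_mem_nhdsWithin] with c hc
  have hc0 : (c:ℝ) ≠ 0 := ne_of_gt hc
  have hpi : Real.pi ≠ 0 := Real.pi_ne_zero
  field_simp

theorem inv_sin_le_and_tendsto :
    (∀ c ∈ Set.Ioc (0 : ℝ) 1,
      1 / Real.sin (c * Real.pi / 2) ≤ (2 / Real.pi) * (c + 1 / c)) ∧
    (∀ c ∈ Set.Ioc (0 : ℝ) 1,
      2 / (Real.sin (c * Real.pi / 2) * (c + 1 / c)) ≤ 4 / Real.pi) ∧
    Filter.Tendsto (fun c : ℝ => 2 / (Real.sin (c * Real.pi / 2) * (c + 1 / c)))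
      (nhdsWithin 0 (Set.Ioi 0)) (nhds (4 / Real.pi)) ∧
    AntitoneOn (fun c : ℝ => 2 / (Real.sin (c * Real.pi / 2) * (c + 1 / c)))
      (Set.Ioc 0 1) := by
  have hpi : (0:ℝ) < Real.pi := Real.pi_pos
  -- sin positivity
  have hsinpos : ∀ c ∈ Set.Ioc (0:ℝ) 1, 0 < Real.sin (c * Real.pi / 2) := by
    intro c hc
    obtain ⟨hc0, hc1⟩ := hc
    apply Real.sin_pos_of_pos_of_lt_pi (by positivity)
    nlinarith
  have hgpos : ∀ c ∈ Set.Ioc (0:ℝ) 1, 0 < Real.sin (c * Real.pi / 2) * (c + 1 / c) := by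
    intro c hc
    have h1 := hsinpos c hc
    have hc0 : (0:ℝ) < c := hc.1
    have h2 : 0 < c + 1 / c := by positivity
    positivity
  -- g c ≥ π/2 on Ioc 0 1
  have hglb : ∀ c ∈ Set.Ioc (0:ℝ) 1, Real.pi / 2 ≤ Real.sin (c * Real.pi / 2) * (c + 1 / c) := by
    intro c hc
    apply le_of_tendsto g_tendsto
    filter_upwards [Ioo_mem_nhdsGT_of_mem (Set.left_mem_Ico.mpr hc.1)] with c' hc'
    exact g_mono ⟨hc'.1, le_trans hc'.2.le hc.2⟩ hc hc'.2.le
  refine ⟨?_, ?_, ?_, ?_⟩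
  · intro c hc
    have h1 := hsinpos c hc
    have h2 := hglb c hc
    rw [div_le_iff₀ h1]
    have hrw : 2 / Real.pi * (c + 1 / c) * Real.sin (c * Real.pi / 2) =
        (2 / Real.pi) * (Real.sin (c * Real.pi / 2) * (c + 1 / c)) := by ring
    rw [hrw]
    calc (1:ℝ) = (2 / Real.pi) * (Real.pi / 2) := by field_simp
      _ ≤ (2 / Real.pi) * (Real.sin (c * Real.pi / 2) * (c + 1 / c)) := by
          apply mul_le_mul_of_nonneg_left h2
          positivity
  · intro c hc
    have h1 := hgpos c hc
    have h2 := hglb c hc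
    calc 2 / (Real.sin (c * Real.pi / 2) * (c + 1 / c)) ≤ 2 / (Real.pi / 2) := by
          apply div_le_div_of_nonneg_left (by norm_num) (by positivity) h2
      _ = 4 / Real.pi := by
          rw [div_div_eq_mul_div]
          norm_num
  · have h := (tendsto_const_nhds : Filter.Tendsto (fun _ : ℝ => (2:ℝ))
      (nhdsWithin 0 (Set.Ioi 0)) (nhds 2)).div g_tendsto (by positivity)
    have hval : (2:ℝ) / (Real.pi / 2) = 4 / Real.pi := by
      rw [div_div_eq_mul_div]
      norm_num
    rw [hval] at h
    exact h
  · intro a ha b hb hab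
    have hga := hgpos a ha
    have hmono := g_mono ha hb hab
    exact div_le_div_of_nonneg_left (by norm_num) hga hmono
end
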